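/- Let f(x; m, σ) denote the density of a normal distribution N(m, σ²) truncated to [0,1], i.e., f(x;m,σ) = (1/σ)·φ((x−m)/σ)/(Φ((1−m)/σ) − Φ((0−m)/σ)) for x ∈ [0,1]. Then for any u and any 0 ≤ x < y ≤ 1, the total variation distance between the truncated normal distributions with means x+u and y+u (same σ) satisfies ‖N̄(y+u,σ²) − N̄(x+u,σ²)‖_TV ≤ (√2/(σ√π))·(y−x). -/

import Mathlib

open MeasureTheory Real Set Filter


open MeasureTheory

/-- Standard normal pdf. -/
noncomputable def stdNormalPdf (t : ℝ) : ℝ :=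
  (Real.sqrt (2 * Real.pi))⁻¹ * Real.exp (-t ^ 2 / 2)

/-- Standard normal cdf. -/
noncomputable def stdNormalCdf (t : ℝ) : ℝ :=
  ∫ s in Set.Iic t, stdNormalPdf s

/-- Density of `N(m, σ²)` truncated to `[0,1]`. -/
noncomputable def truncNormalPdf (x m σ : ℝ) : ℝ :=
  (1 / σ) * stdNormalPdf ((x - m) / σ) /
    (stdNormalCdf ((1 - m) / σ) - stdNormalCdf ((0 - m) / σ))


lemma phi_pos (t : ℝ) : 0 < stdNormalPdf t := by
  unfold stdNormalPdf
  have h : 0 < Real.sqrt (2 * Real.pi) := Real.sqrt_pos.2 (by positivity)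
  positivity

lemma phi_cont : Continuous stdNormalPdf := by
  unfold stdNormalPdf; fun_prop

lemma phi_eq (t : ℝ) : stdNormalPdf t = (Real.sqrt (2 * Real.pi))⁻¹ * Real.exp (-(1/2) * t ^ 2) := by
  unfold stdNormalPdf; congr 1; ring_nf

lemma phi_even (t : ℝ) : stdNormalPdf (-t) = stdNormalPdf t := by
  unfold stdNormalPdf; congr 1; ring_nf

lemma phi_le (t : ℝ) : stdNormalPdf t ≤ stdNormalPdf 0 := by
  unfold stdNormalPdf
  have h : Real.exp (-t ^ 2 / 2) ≤ Real.exp (-(0:ℝ) ^ 2 / 2) :=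
    Real.exp_le_exp.2 (by nlinarith [sq_nonneg t])
  have h0 : (0:ℝ) ≤ (Real.sqrt (2 * Real.pi))⁻¹ := by positivity
  exact mul_le_mul_of_nonneg_left h h0

lemma phi_integrable : Integrable stdNormalPdf := by
  have h := (integrable_exp_neg_mul_sq (by norm_num : (0:ℝ) < 1/2)).const_mul
    (Real.sqrt (2 * Real.pi))⁻¹
  refine h.congr (Filter.Eventually.of_forall fun t => ?_)
  rw [phi_eq]

lemma phi_integral : ∫ t, stdNormalPdf t = 1 := by
  have h : ∫ t : ℝ, Real.exp (-(1/2) * t ^ 2) = Real.sqrt (π / (1/2)) :=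
    integral_gaussian (1/2)
  have h2 : (∫ t, stdNormalPdf t) = (Real.sqrt (2 * Real.pi))⁻¹ * Real.sqrt (π / (1/2)) := by
    rw [← h, ← integral_const_mul]
    congr 1; funext t; rw [phi_eq]
  rw [h2]
  have h3 : π / (1/2) = 2 * π := by ring
  rw [h3, inv_mul_cancel₀ (ne_of_gt (Real.sqrt_pos.2 (by positivity)))]

lemma id_mul_phi_integrable : Integrable (fun t => t * stdNormalPdf t) := by
  have h := (integrable_mul_exp_neg_mul_sq (by norm_num : (0:ℝ) < 1/2)).const_mul
    (Real.sqrt (2 * Real.pi))⁻¹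
  refine h.congr (Filter.Eventually.of_forall fun t => ?_)
  simp only [phi_eq]; ring

lemma phi_hasDeriv (t : ℝ) : HasDerivAt stdNormalPdf (-t * stdNormalPdf t) t := by
  have h1 : HasDerivAt (fun t : ℝ => -t ^ 2 / 2) (-t) t := by
    have := ((hasDerivAt_pow 2 t).neg).div_const 2
    refine this.congr_deriv ?_; push_cast; ring
  have h2 := (Real.hasDerivAt_exp (-t ^ 2 / 2)).comp t h1
  have h3 := h2.const_mul (Real.sqrt (2 * Real.pi))⁻¹
  have he : stdNormalPdf = fun u : ℝ => (Real.sqrt (2 * Real.pi))⁻¹ * Real.exp (-u ^ 2 / 2) := rfl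
  rw [he]
  refine HasDerivAt.congr_deriv h3 ?_
  show _ = -t * stdNormalPdf t
  unfold stdNormalPdf; ring

lemma phi_tendsto_atTop : Tendsto stdNormalPdf atTop (nhds 0) := by
  have h1 : Tendsto (fun t : ℝ => -t ^ 2 / 2) atTop atBot := by
    apply Tendsto.atBot_div_const (by norm_num)
    exact tendsto_neg_atTop_atBot.comp (tendsto_pow_atTop (two_ne_zero))
  have h2 := (Real.tendsto_exp_atBot).comp h1
  have h3 := h2.const_mul (Real.sqrt (2 * Real.pi))⁻¹
  have he : stdNormalPdf = fun u : ℝ => (Real.sqrt (2 * Real.pi))⁻¹ * Real.exp (-u ^ 2 / 2) := rfl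
  rw [he]
  simpa using h3

lemma phi_tendsto_atBot : Tendsto stdNormalPdf atBot (nhds 0) := by
  have := phi_tendsto_atTop.comp tendsto_neg_atBot_atTop
  refine this.congr fun t => ?_
  exact phi_even t

lemma phi_ii (a b : ℝ) : IntervalIntegrable stdNormalPdf volume a b :=
  phi_integrable.intervalIntegrable

lemma cdf_sub (a b : ℝ) : stdNormalCdf b - stdNormalCdf a = ∫ t in a..b, stdNormalPdf t :=
  intervalIntegral.integral_Iic_sub_Iic phi_integrable.integrableOn phi_integrable.integrableOn

lemma cdf_hasDeriv (t : ℝ) : HasDerivAt stdNormalCdf (stdNormalPdf t) t := by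
  have he : stdNormalCdf = fun u => stdNormalCdf 0 + ∫ s in (0:ℝ)..u, stdNormalPdf s := by
    funext u; rw [← cdf_sub]; ring
  rw [he]
  have h := intervalIntegral.integral_hasDerivAt_right (phi_ii 0 t)
    (phi_cont.stronglyMeasurableAtFilter _ _) phi_cont.continuousAt
  exact h.const_add _

lemma cdf_lt {a b : ℝ} (h : a < b) : stdNormalCdf a < stdNormalCdf b := by
  have h2 : 0 < ∫ t in a..b, stdNormalPdf t :=
    intervalIntegral.intervalIntegral_pos_of_pos (phi_ii a b) phi_pos h
  have := cdf_sub a b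
  linarith

lemma cdf_mono : Monotone stdNormalCdf := by
  intro a b hab
  rcases eq_or_lt_of_le hab with rfl | h
  · exact le_rfl
  · exact (cdf_lt h).le

lemma one_sub_cdf (t : ℝ) : 1 - stdNormalCdf t = ∫ x in Ioi t, stdNormalPdf x := by
  have h := intervalIntegral.integral_Iic_add_Ioi (b := t) phi_integrable.integrableOn phi_integrable.integrableOn
  rw [phi_integral] at h
  have : stdNormalCdf t = ∫ x in Iic t, stdNormalPdf x := rfl
  linarith

lemma cdf_lt_one (t : ℝ) : stdNormalCdf t < 1 := by
  have h : 0 < ∫ x in Ioi t, stdNormalPdf x := by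
    have h1 : (0:ℝ) < ∫ x in t..(t+1), stdNormalPdf x :=
      intervalIntegral.intervalIntegral_pos_of_pos (phi_ii _ _) phi_pos (by linarith)
    have h2 : (∫ x in t..(t+1), stdNormalPdf x) = ∫ x in Ioc t (t+1), stdNormalPdf x :=
      intervalIntegral.integral_of_le (by linarith)
    have h3 : (∫ x in Ioc t (t+1), stdNormalPdf x) ≤ ∫ x in Ioi t, stdNormalPdf x := by
      apply setIntegral_mono_set phi_integrable.integrableOn
        (Filter.Eventually.of_forall fun x => (phi_pos x).le)
      exact HasSubset.Subset.eventuallyLE (fun x hx => hx.1)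
    linarith
  have := one_sub_cdf t
  linarith

lemma cdf_pos (t : ℝ) : 0 < stdNormalCdf t := by
  have h1 : (0:ℝ) < ∫ x in (t-1)..t, stdNormalPdf x :=
    intervalIntegral.intervalIntegral_pos_of_pos (phi_ii _ _) phi_pos (by linarith)
  have h2 : (∫ x in (t-1)..t, stdNormalPdf x) = ∫ x in Ioc (t-1) t, stdNormalPdf x :=
    intervalIntegral.integral_of_le (by linarith)
  have h3 : (∫ x in Ioc (t-1) t, stdNormalPdf x) ≤ ∫ x in Iic t, stdNormalPdf x := by
    apply setIntegral_mono_set phi_integrable.integrableOn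
      (Filter.Eventually.of_forall fun x => (phi_pos x).le)
    exact HasSubset.Subset.eventuallyLE (fun x hx => hx.2)
  have : stdNormalCdf t = ∫ x in Iic t, stdNormalPdf x := rfl
  linarith

lemma cdf_antideriv (t : ℝ) :
    HasDerivAt (fun u => u * stdNormalCdf u + stdNormalPdf u) (stdNormalCdf t) t := by
  have h := ((hasDerivAt_id t).mul (cdf_hasDeriv t)).add (phi_hasDeriv t)
  refine h.congr_deriv ?_
  simp only [id]; ring

lemma mills_right (u : ℝ) : u * (1 - stdNormalCdf u) ≤ stdNormalPdf u := by
  have hIoi : (∫ x in Ioi u, x * stdNormalPdf x) = stdNormalPdf u := by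
    have h := integral_Ioi_of_hasDerivAt_of_tendsto'
      (f := fun t => -stdNormalPdf t) (f' := fun x => x * stdNormalPdf x) (a := u)
      (fun x _ => by exact (phi_hasDeriv x).neg.congr_deriv (by ring))
      id_mul_phi_integrable.integrableOn phi_tendsto_atTop.neg
    simp only [neg_zero] at h
    linarith
  have h1 : u * (1 - stdNormalCdf u) = ∫ x in Ioi u, u * stdNormalPdf x := by
    rw [one_sub_cdf, ← integral_const_mul]
  rw [h1, ← hIoi]
  apply setIntegral_mono_on (phi_integrable.integrableOn.const_mul u)
    id_mul_phi_integrable.integrableOn measurableSet_Ioi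
  intro x hx
  exact mul_le_mul_of_nonneg_right (le_of_lt hx) (phi_pos x).le

lemma mills_left (u : ℝ) : (-u) * stdNormalCdf u ≤ stdNormalPdf u := by
  have hIic : (∫ x in Iic u, -x * stdNormalPdf x) = stdNormalPdf u := by
    have h := integral_Iic_of_hasDerivAt_of_tendsto'
      (f := stdNormalPdf) (f' := fun x => -x * stdNormalPdf x) (a := u)
      (fun x _ => phi_hasDeriv x)
      ((id_mul_phi_integrable.neg.congr (Filter.Eventually.of_forall fun x => by simp only [Pi.neg_apply]; ring)).integrableOn)
      phi_tendsto_atBot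
    simpa using h
  have h1 : (-u) * stdNormalCdf u = ∫ x in Iic u, (-u) * stdNormalPdf x := by
    have : stdNormalCdf u = ∫ x in Iic u, stdNormalPdf x := rfl
    rw [this, ← integral_const_mul]
  rw [h1, ← hIic]
  apply setIntegral_mono_on (phi_integrable.integrableOn.const_mul (-u))
    ((id_mul_phi_integrable.neg.congr (Filter.Eventually.of_forall fun x => by simp only [Pi.neg_apply]; ring)).integrableOn)
    measurableSet_Iic
  intro x hx
  exact mul_le_mul_of_nonneg_right (by simp at hx ⊢; linarith) (phi_pos x).le

lemma cdf_cont : Continuous stdNormalCdf :=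
  continuous_iff_continuousAt.2 fun t => (cdf_hasDeriv t).continuousAt

lemma cdf_ii (a b : ℝ) : IntervalIntegrable stdNormalCdf volume a b :=
  cdf_cont.intervalIntegrable a b

lemma int_id_phi (a b : ℝ) :
    ∫ t in a..b, t * stdNormalPdf t = stdNormalPdf a - stdNormalPdf b := by
  have h := intervalIntegral.integral_eq_sub_of_hasDerivAt (f := fun t => -stdNormalPdf t)
    (f' := fun t => t * stdNormalPdf t) (a := a) (b := b)
    (fun x _ => by exact (phi_hasDeriv x).neg.congr_deriv (by ring))
    (id_mul_phi_integrable.intervalIntegrable)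
  rw [h]; ring

lemma int_cdf (l u : ℝ) : ∫ t in l..u, stdNormalCdf t
    = (u * stdNormalCdf u + stdNormalPdf u) - (l * stdNormalCdf l + stdNormalPdf l) :=
  intervalIntegral.integral_eq_sub_of_hasDerivAt (fun x _ => cdf_antideriv x) (cdf_ii l u)

lemma int_cdf_shift (l u d : ℝ) : ∫ t in l..u, stdNormalCdf (t - d)
    = ((u - d) * stdNormalCdf (u - d) + stdNormalPdf (u - d))
      - ((l - d) * stdNormalCdf (l - d) + stdNormalPdf (l - d)) := by
  rw [intervalIntegral.integral_comp_sub_right (fun t => stdNormalCdf t) d, int_cdf]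

lemma log_phi (t : ℝ) :
    Real.log (stdNormalPdf t) = -Real.log (Real.sqrt (2 * π)) - t ^ 2 / 2 := by
  unfold stdNormalPdf
  rw [Real.log_mul (ne_of_gt (by positivity)) (Real.exp_ne_zero _), Real.log_inv, Real.log_exp]
  ring

lemma c_mem {a b c : ℝ} (hab : a < b)
    (hc : c = (stdNormalPdf a - stdNormalPdf b) / (stdNormalCdf b - stdNormalCdf a)) :
    (c * (stdNormalCdf b - stdNormalCdf a) = stdNormalPdf a - stdNormalPdf b)
      ∧ a ≤ c ∧ c ≤ b := by
  have hZpos : 0 < stdNormalCdf b - stdNormalCdf a := sub_pos.2 (cdf_lt hab)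
  have hint : ∫ t in a..b, t * stdNormalPdf t = stdNormalPdf a - stdNormalPdf b := int_id_phi a b
  have hlow : a * (stdNormalCdf b - stdNormalCdf a) ≤ stdNormalPdf a - stdNormalPdf b := by
    rw [← hint]
    have h1 : a * (stdNormalCdf b - stdNormalCdf a) = ∫ t in a..b, a * stdNormalPdf t := by
      rw [intervalIntegral.integral_const_mul, ← cdf_sub]
    rw [h1]
    apply intervalIntegral.integral_mono_on hab.le ((phi_ii a b).const_mul a)
      (id_mul_phi_integrable.intervalIntegrable)
    intro x hx; exact mul_le_mul_of_nonneg_right hx.1 (phi_pos x).le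
  have hhigh : stdNormalPdf a - stdNormalPdf b ≤ b * (stdNormalCdf b - stdNormalCdf a) := by
    rw [← hint]
    have h1 : b * (stdNormalCdf b - stdNormalCdf a) = ∫ t in a..b, b * stdNormalPdf t := by
      rw [intervalIntegral.integral_const_mul, ← cdf_sub]
    rw [h1]
    apply intervalIntegral.integral_mono_on hab.le (id_mul_phi_integrable.intervalIntegrable)
      ((phi_ii a b).const_mul b)
    intro x hx; exact mul_le_mul_of_nonneg_right hx.2 (phi_pos x).le
  refine ⟨by rw [hc]; field_simp, ?_, ?_⟩
  · rw [hc, le_div_iff₀ hZpos]; exact hlow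
  · rw [hc, div_le_iff₀ hZpos]; exact hhigh

lemma P_le {a b c : ℝ} (hab : a < b)
    (hcZ : c * (stdNormalCdf b - stdNormalCdf a) = stdNormalPdf a - stdNormalPdf b)
    (hac : a ≤ c) (hcb : c ≤ b) :
    stdNormalPdf c - stdNormalPdf b - c * (stdNormalCdf b - stdNormalCdf c)
      ≤ stdNormalPdf 0 * (stdNormalCdf b - stdNormalCdf a) := by
  have hZpos : 0 < stdNormalCdf b - stdNormalCdf a := sub_pos.2 (cdf_lt hab)
  set Z := stdNormalCdf b - stdNormalCdf a with hZ
  set W : ℝ → ℝ := fun t => Z * stdNormalCdf (t - c) - stdNormalCdf t + stdNormalCdf a with hW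
  have hWd : ∀ t : ℝ, HasDerivAt W (Z * stdNormalPdf (t - c) - stdNormalPdf t) t := by
    intro t
    have h1 : HasDerivAt (fun t : ℝ => stdNormalCdf (t - c)) (stdNormalPdf (t - c)) t := by
      have := (cdf_hasDeriv (t - c)).comp t ((hasDerivAt_id t).sub_const c)
      exact this.congr_deriv (mul_one _)
    have h2 := ((h1.const_mul Z).sub (cdf_hasDeriv t)).add_const (stdNormalCdf a)
    exact h2
  have hWa : 0 < W a := by
    have : W a = Z * stdNormalCdf (a - c) := by rw [hW]; ring
    rw [this]; exact mul_pos hZpos (cdf_pos _)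
  have hWb : W b < 0 := by
    have h : W b = Z * (stdNormalCdf (b - c) - 1) := by rw [hW, hZ]; ring
    rw [h]
    exact mul_neg_of_pos_of_neg hZpos (sub_neg.2 (cdf_lt_one _))
  have hsign : ∀ u : ℝ, 0 < Z * stdNormalPdf (u - c) - stdNormalPdf u ↔
      0 < Real.log Z + c * u - c ^ 2 / 2 := by
    intro u
    rw [sub_pos]
    rw [← Real.log_lt_log_iff (phi_pos u) (mul_pos hZpos (phi_pos _))]
    rw [Real.log_mul (ne_of_gt hZpos) (ne_of_gt (phi_pos _)), log_phi, log_phi]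
    constructor <;> intro h <;> nlinarith [sq_nonneg (u - c), sq_nonneg u]
  have dichot : (∀ t ∈ Icc c b, W t ≤ 0) ∨ (∀ t ∈ Icc a c, 0 ≤ W t) := by
    by_contra hcon
    push_neg at hcon
    obtain ⟨⟨t₁, ht₁m, ht₁⟩, ⟨t₂, ht₂m, ht₂⟩⟩ := hcon
    have hat₂ : a < t₂ := by
      rcases eq_or_lt_of_le ht₂m.1 with rfl | h
      · linarith
      · exact h
    have ht₁b : t₁ < b := by
      rcases eq_or_lt_of_le ht₁m.2 with rfl | h
      · linarith
      · exact h
    have ht₂₁ : t₂ < t₁ := by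
      rcases eq_or_lt_of_le (le_trans ht₂m.2 ht₁m.1) with rfl | h
      · linarith
      · exact h
    obtain ⟨ζ, hζm, hζ⟩ := exists_hasDerivAt_eq_slope W _ hat₂
      (fun t _ => (hWd t).continuousAt.continuousWithinAt) (fun x _ => hWd x)
    obtain ⟨ξ, hξm, hξ⟩ := exists_hasDerivAt_eq_slope W _ ht₂₁
      (fun t _ => (hWd t).continuousAt.continuousWithinAt) (fun x _ => hWd x)
    obtain ⟨η, hηm, hη⟩ := exists_hasDerivAt_eq_slope W _ ht₁b
      (fun t _ => (hWd t).continuousAt.continuousWithinAt) (fun x _ => hWd x)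
    have hζneg : ¬ (0 < Real.log Z + c * ζ - c ^ 2 / 2) := by
      rw [← hsign ζ, hζ]
      push_neg
      apply le_of_lt
      apply div_neg_of_neg_of_pos (by linarith) (by linarith)
    have hηneg : ¬ (0 < Real.log Z + c * η - c ^ 2 / 2) := by
      rw [← hsign η, hη]
      push_neg
      apply le_of_lt
      apply div_neg_of_neg_of_pos (by linarith) (by linarith)
    have hξpos : 0 < Real.log Z + c * ξ - c ^ 2 / 2 := by
      rw [← hsign ξ, hξ]
      apply div_pos (by linarith) (by linarith)
    push_neg at hζneg hηneg
    have hζξ : ζ < ξ := by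
      have := hζm.2; have := hξm.1; linarith
    have hξη : ξ < η := by
      have := hξm.2; have := hηm.1; linarith
    rcases le_or_gt 0 c with hcpos | hcneg
    · nlinarith
    · nlinarith
  have hc1 : Continuous fun t : ℝ => stdNormalCdf (t - c) :=
    cdf_cont.comp (continuous_sub_right c)
  have hcontA : Continuous fun t : ℝ => Z * (1 - stdNormalCdf (t - c)) :=
    continuous_const.mul (continuous_const.sub hc1)
  have hcontB : Continuous fun t : ℝ => Z * stdNormalCdf (t - c) :=
    continuous_const.mul hc1
  rcases dichot with hA | hB
  · -- case A : compare on [c, b]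
    have hle : (∫ t in c..b, (stdNormalCdf b - stdNormalCdf t))
        ≤ ∫ t in c..b, Z * (1 - stdNormalCdf (t - c)) := by
      apply intervalIntegral.integral_mono_on hcb
        ((intervalIntegrable_const).sub (cdf_ii c b)) (hcontA.intervalIntegrable c b)
      intro t ht
      have h := hA t ht
      rw [hW] at h
      simp only at h
      nlinarith [h]
    have e1 : (∫ t in c..b, (stdNormalCdf b - stdNormalCdf t))
        = (b - c) * stdNormalCdf b
          - ((b * stdNormalCdf b + stdNormalPdf b) - (c * stdNormalCdf c + stdNormalPdf c)) := by
      rw [intervalIntegral.integral_sub intervalIntegrable_const (cdf_ii c b),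
        intervalIntegral.integral_const, int_cdf]
      simp [smul_eq_mul]
    have e2 : (∫ t in c..b, Z * (1 - stdNormalCdf (t - c)))
        = Z * ((b - c) - (((b - c) * stdNormalCdf (b - c) + stdNormalPdf (b - c))
            - (0 * stdNormalCdf 0 + stdNormalPdf 0))) := by
      rw [intervalIntegral.integral_const_mul,
        intervalIntegral.integral_sub intervalIntegrable_const (hc1.intervalIntegrable c b),
        intervalIntegral.integral_const, int_cdf_shift]
      norm_num
    rw [e1, e2] at hle
    have hm := mills_right (b - c)
    nlinarith [hle, hm, hZpos]
  · -- case B : compare on [a, c]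
    have hle : (∫ t in a..c, (stdNormalCdf t - stdNormalCdf a))
        ≤ ∫ t in a..c, Z * stdNormalCdf (t - c) := by
      apply intervalIntegral.integral_mono_on hac
        ((cdf_ii a c).sub intervalIntegrable_const) (hcontB.intervalIntegrable a c)
      intro t ht
      have h := hB t ht
      rw [hW] at h
      simp only at h
      nlinarith [h]
    have e3 : (∫ t in a..c, (stdNormalCdf t - stdNormalCdf a))
        = ((c * stdNormalCdf c + stdNormalPdf c) - (a * stdNormalCdf a + stdNormalPdf a))
          - (c - a) * stdNormalCdf a := by
      rw [intervalIntegral.integral_sub (cdf_ii a c) intervalIntegrable_const,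
        intervalIntegral.integral_const, int_cdf]
      simp [smul_eq_mul]
    have e4 : (∫ t in a..c, Z * stdNormalCdf (t - c))
        = Z * ((0 * stdNormalCdf 0 + stdNormalPdf 0)
            - ((a - c) * stdNormalCdf (a - c) + stdNormalPdf (a - c))) := by
      rw [intervalIntegral.integral_const_mul, int_cdf_shift]
      norm_num
    rw [e3, e4] at hle
    have hm := mills_left (a - c)
    have hPe : stdNormalPdf c - stdNormalPdf b - c * (stdNormalCdf b - stdNormalCdf c)
        = ((c * stdNormalCdf c + stdNormalPdf c) - (a * stdNormalCdf a + stdNormalPdf a))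
          - (c - a) * stdNormalCdf a := by
      rw [hZ] at hcZ
      linear_combination -hcZ
    rw [hPe]
    nlinarith [hle, hm, hZpos]

lemma key_ineq {a b s : ℝ} (hab : a < b) (has : a ≤ s) (hsb : s ≤ b) :
    0 ≤ (stdNormalCdf b - stdNormalCdf s) * (stdNormalPdf s - stdNormalPdf a)
        + (stdNormalCdf s - stdNormalCdf a) * (stdNormalPdf s - stdNormalPdf b) ∧
      (stdNormalCdf b - stdNormalCdf s) * (stdNormalPdf s - stdNormalPdf a)
        + (stdNormalCdf s - stdNormalCdf a) * (stdNormalPdf s - stdNormalPdf b)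
      ≤ stdNormalPdf 0 * (stdNormalCdf b - stdNormalCdf a) ^ 2 := by
  have hZpos : 0 < stdNormalCdf b - stdNormalCdf a := sub_pos.2 (cdf_lt hab)
  obtain ⟨hcZ, hac, hcb⟩ := c_mem hab rfl
  set c := (stdNormalPdf a - stdNormalPdf b) / (stdNormalCdf b - stdNormalCdf a) with hc
  set N : ℝ → ℝ := fun u => (stdNormalCdf b - stdNormalCdf u) * (stdNormalPdf u - stdNormalPdf a)
      + (stdNormalCdf u - stdNormalCdf a) * (stdNormalPdf u - stdNormalPdf b) with hN
  have hNd : ∀ u : ℝ, HasDerivAt N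
      (stdNormalPdf u * (stdNormalPdf a - stdNormalPdf b)
        - u * stdNormalPdf u * (stdNormalCdf b - stdNormalCdf a)) u := by
    intro u
    have h1 := ((hasDerivAt_const u (stdNormalCdf b)).sub (cdf_hasDeriv u)).mul
      ((phi_hasDeriv u).sub_const (stdNormalPdf a))
    have h2 := ((cdf_hasDeriv u).sub_const (stdNormalCdf a)).mul
      ((phi_hasDeriv u).sub_const (stdNormalPdf b))
    have h3 := h1.add h2
    refine h3.congr_deriv ?_
    simp only [Pi.sub_apply]; ring
  have hderiv_eq : ∀ u : ℝ, stdNormalPdf u * (stdNormalPdf a - stdNormalPdf b)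
      - u * stdNormalPdf u * (stdNormalCdf b - stdNormalCdf a)
      = stdNormalPdf u * (stdNormalCdf b - stdNormalCdf a) * (c - u) := by
    intro u
    rw [← hcZ]; ring
  have hmono : MonotoneOn N (Icc a c) := by
    apply monotoneOn_of_deriv_nonneg (convex_Icc a c)
      (fun u _ => (hNd u).continuousAt.continuousWithinAt)
      (fun u _ => (hNd u).differentiableAt.differentiableWithinAt)
    intro u hu
    rw [interior_Icc] at hu
    rw [(hNd u).deriv, hderiv_eq u]
    exact mul_nonneg (mul_nonneg (phi_pos u).le hZpos.le) (by linarith [hu.2])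
  have hanti : AntitoneOn N (Icc c b) := by
    apply antitoneOn_of_deriv_nonpos (convex_Icc c b)
      (fun u _ => (hNd u).continuousAt.continuousWithinAt)
      (fun u _ => (hNd u).differentiableAt.differentiableWithinAt)
    intro u hu
    rw [interior_Icc] at hu
    rw [(hNd u).deriv, hderiv_eq u]
    apply mul_nonpos_of_nonneg_of_nonpos (mul_nonneg (phi_pos u).le hZpos.le)
    linarith [hu.1]
  have hNa : N a = 0 := by rw [hN]; ring
  have hNb : N b = 0 := by rw [hN]; ring
  have hNc : N c ≤ stdNormalPdf 0 * (stdNormalCdf b - stdNormalCdf a) ^ 2 := by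
    have hP := P_le hab hcZ hac hcb
    have hNceq : N c = (stdNormalCdf b - stdNormalCdf a) *
        (stdNormalPdf c - stdNormalPdf b - c * (stdNormalCdf b - stdNormalCdf c)) := by
      rw [hN]
      linear_combination (stdNormalCdf b - stdNormalCdf c) * hcZ
    rw [hNceq]
    have h2 := mul_le_mul_of_nonneg_left hP hZpos.le
    calc (stdNormalCdf b - stdNormalCdf a) *
        (stdNormalPdf c - stdNormalPdf b - c * (stdNormalCdf b - stdNormalCdf c))
        ≤ (stdNormalCdf b - stdNormalCdf a) * (stdNormalPdf 0 * (stdNormalCdf b - stdNormalCdf a)) := h2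
      _ = stdNormalPdf 0 * (stdNormalCdf b - stdNormalCdf a) ^ 2 := by ring
  constructor
  · show 0 ≤ N s
    rcases le_total s c with hsc | hcs
    · have h := hmono ⟨le_rfl, hac⟩ ⟨has, hsc⟩ has
      linarith [hNa ▸ h]
    · have h := hanti ⟨hcs, hsb⟩ ⟨hcb, le_rfl⟩ hsb
      linarith [hNb ▸ h]
  · show N s ≤ _
    rcases le_total s c with hsc | hcs
    · have h := hmono ⟨has, hsc⟩ ⟨hac, le_rfl⟩ hsc
      linarith
    · have h := hanti ⟨le_rfl, hcb⟩ ⟨hcs, hsb⟩ hcs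
      linarith

lemma aux_alg {σ A S B pa ps pb : ℝ} (hσ : σ ≠ 0) (hZ : B - A ≠ 0) :
    ((ps * (-1 / σ) - pa * (-1 / σ)) * (B - A) - (S - A) * (pb * (-1 / σ) - pa * (-1 / σ))) /
        (B - A) ^ 2
      = -(((B - S) * (ps - pa) + (S - A) * (ps - pb)) / (σ * (B - A) ^ 2)) := by
  field_simp
  ring

noncomputable def truncCdf (σ T m : ℝ) : ℝ :=
  (stdNormalCdf ((T - m) / σ) - stdNormalCdf ((0 - m) / σ)) /
    (stdNormalCdf ((1 - m) / σ) - stdNormalCdf ((0 - m) / σ))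

lemma int_trunc {σ : ℝ} (hσ : 0 < σ) (m T : ℝ) :
    ∫ t in (0:ℝ)..T, truncNormalPdf t m σ = truncCdf σ T m := by
  unfold truncNormalPdf truncCdf
  rw [intervalIntegral.integral_div]
  congr 1
  rw [intervalIntegral.integral_const_mul]
  have h1 : (∫ t in (0:ℝ)..T, stdNormalPdf ((t - m) / σ))
      = ∫ x in (0 - m)..(T - m), stdNormalPdf (x / σ) :=
    intervalIntegral.integral_comp_sub_right (fun x => stdNormalPdf (x / σ)) m
  have h2 : (∫ x in (0 - m)..(T - m), stdNormalPdf (x / σ))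
      = σ * ∫ x in (0 - m) / σ..(T - m) / σ, stdNormalPdf x := by
    rw [intervalIntegral.integral_comp_div (f := stdNormalPdf) (ne_of_gt hσ)]
    simp [smul_eq_mul]
  rw [h1, h2, ← cdf_sub]
  field_simp

lemma truncCdf_lip {σ : ℝ} (hσ : 0 < σ) {T : ℝ} (hT0 : 0 ≤ T) (hT1 : T ≤ 1) (p q : ℝ) :
    |truncCdf σ T q - truncCdf σ T p| ≤ stdNormalPdf 0 / σ * |q - p| := by
  set F' : ℝ → ℝ := fun m =>
    ((stdNormalPdf ((T - m) / σ) * (-1 / σ) - stdNormalPdf ((0 - m) / σ) * (-1 / σ)) *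
        (stdNormalCdf ((1 - m) / σ) - stdNormalCdf ((0 - m) / σ)) -
      (stdNormalCdf ((T - m) / σ) - stdNormalCdf ((0 - m) / σ)) *
        (stdNormalPdf ((1 - m) / σ) * (-1 / σ) - stdNormalPdf ((0 - m) / σ) * (-1 / σ))) /
      (stdNormalCdf ((1 - m) / σ) - stdNormalCdf ((0 - m) / σ)) ^ 2 with hF'
  have hZσ : ∀ m : ℝ, (0 - m) / σ < (1 - m) / σ := fun m =>
    (div_lt_div_iff_of_pos_right hσ).2 (by linarith)
  have hZne : ∀ m : ℝ, stdNormalCdf ((1 - m) / σ) - stdNormalCdf ((0 - m) / σ) ≠ 0 :=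
    fun m => ne_of_gt (sub_pos.2 (cdf_lt (hZσ m)))
  have hd : ∀ m, HasDerivAt (fun m => truncCdf σ T m) (F' m) m := by
    intro m
    have h1 : ∀ r : ℝ, HasDerivAt (fun m : ℝ => stdNormalCdf ((r - m) / σ))
        (stdNormalPdf ((r - m) / σ) * (-1 / σ)) m := by
      intro r
      have hi : HasDerivAt (fun m : ℝ => (r - m) / σ) (-1 / σ) m := by
        have := ((hasDerivAt_id m).const_sub r).div_const σ
        simpa using this
      exact (cdf_hasDeriv _).comp m hi
    have := (((h1 T).sub (h1 0)).div (((h1 1).sub (h1 0))) (hZne m))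
    exact this
  have hbound : ∀ m, ‖F' m‖ ≤ stdNormalPdf 0 / σ := by
    intro m
    have hab : (0 - m) / σ < (1 - m) / σ := hZσ m
    have has : (0 - m) / σ ≤ (T - m) / σ := by
      apply (div_le_div_iff_of_pos_right hσ).2; linarith
    have hsb : (T - m) / σ ≤ (1 - m) / σ := by
      apply (div_le_div_iff_of_pos_right hσ).2; linarith
    obtain ⟨hK0, hK1⟩ := key_ineq hab has hsb
    have hZpos : 0 < stdNormalCdf ((1 - m) / σ) - stdNormalCdf ((0 - m) / σ) :=
      sub_pos.2 (cdf_lt hab)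
    have hF'eq : F' m = -(((stdNormalCdf ((1 - m) / σ) - stdNormalCdf ((T - m) / σ)) *
          (stdNormalPdf ((T - m) / σ) - stdNormalPdf ((0 - m) / σ))
        + (stdNormalCdf ((T - m) / σ) - stdNormalCdf ((0 - m) / σ)) *
          (stdNormalPdf ((T - m) / σ) - stdNormalPdf ((1 - m) / σ))) /
        (σ * (stdNormalCdf ((1 - m) / σ) - stdNormalCdf ((0 - m) / σ)) ^ 2)) := by
      rw [hF']
      exact aux_alg (ne_of_gt hσ) (hZne m)
    rw [hF'eq, Real.norm_eq_abs, abs_neg,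
      abs_of_nonneg (div_nonneg hK0 (by positivity))]
    rw [div_le_div_iff₀ (by positivity) hσ]
    nlinarith [hK1, hσ, hZpos, sq_nonneg (stdNormalCdf ((1 - m) / σ) - stdNormalCdf ((0 - m) / σ))]
  have hmvt := Convex.norm_image_sub_le_of_norm_hasDerivWithin_le
    (f := fun m => truncCdf σ T m) (f' := F') (s := (univ : Set ℝ)) (C := stdNormalPdf 0 / σ)
    (fun x _ => (hd x).hasDerivWithinAt) (fun x _ => hbound x) convex_univ (mem_univ p) (mem_univ q)
  simpa [Real.norm_eq_abs] using hmvt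

lemma const_eq {σ : ℝ} (hσ : 0 < σ) :
    Real.sqrt 2 / (σ * Real.sqrt π) = 2 * stdNormalPdf 0 / σ := by
  have h0 : stdNormalPdf 0 = (Real.sqrt (2 * π))⁻¹ := by
    unfold stdNormalPdf; norm_num
  rw [h0, Real.sqrt_mul (by norm_num : (0:ℝ) ≤ 2)]
  have h2 : Real.sqrt 2 * Real.sqrt 2 = 2 := Real.mul_self_sqrt (by norm_num)
  have hπ : 0 < Real.sqrt π := Real.sqrt_pos.2 Real.pi_pos
  have hs2 : 0 < Real.sqrt 2 := Real.sqrt_pos.2 (by norm_num)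
  field_simp
  linear_combination h2

set_option maxHeartbeats 2000000 in
/-- For the normal laws truncated to `[0,1]`, the total variation distance
(the `L¹` distance of the densities on `[0,1]`) between means `y+u` and `x+u`
is at most `(√2/(σ√π))·(y−x)` for `0 ≤ x < y ≤ 1`. -/
theorem truncated_normal_tv_lipschitz (σ u x y : ℝ) (hσ : 0 < σ)
    (hx : 0 ≤ x) (hxy : x < y) (hy : y ≤ 1) :
    (∫ t in (0:ℝ)..1, |truncNormalPdf t (y + u) σ - truncNormalPdf t (x + u) σ|) ≤
      (Real.sqrt 2 / (σ * Real.sqrt Real.pi)) * (y - x) := by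
  set p := x + u with hp
  set q := y + u with hq
  have hpq : p < q := by rw [hp, hq]; linarith
  have hZσ : ∀ m : ℝ, (0 - m) / σ < (1 - m) / σ := fun m =>
    (div_lt_div_iff_of_pos_right hσ).2 (by linarith)
  have hZpos : ∀ m : ℝ, 0 < stdNormalCdf ((1 - m) / σ) - stdNormalCdf ((0 - m) / σ) :=
    fun m => sub_pos.2 (cdf_lt (hZσ m))
  have htc : ∀ m : ℝ, Continuous fun t => truncNormalPdf t m σ := by
    intro m
    unfold truncNormalPdf
    exact (continuous_const.mul
      (phi_cont.comp ((continuous_sub_right m).div_const σ))).div_const _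
  have hii : ∀ (m a b : ℝ), IntervalIntegrable (fun t => truncNormalPdf t m σ) volume a b :=
    fun m a b => (htc m).intervalIntegrable a b
  have hRHSpos : 0 ≤ Real.sqrt 2 / (σ * Real.sqrt π) * (y - x) := by
    apply mul_nonneg
    · exact div_nonneg (Real.sqrt_nonneg 2) (mul_nonneg hσ.le (Real.sqrt_nonneg π))
    · linarith
  have hone : ∀ m : ℝ, ∫ t in (0:ℝ)..1, truncNormalPdf t m σ = 1 := by
    intro m
    rw [int_trunc hσ m 1]
    exact div_self (ne_of_gt (hZpos m))
  obtain ⟨tstar, hts⟩ : ∃ ts : ℝ, ts = (p + q) / 2 + σ ^ 2 *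
      (Real.log (stdNormalCdf ((1 - q) / σ) - stdNormalCdf ((0 - q) / σ))
        - Real.log (stdNormalCdf ((1 - p) / σ) - stdNormalCdf ((0 - p) / σ))) / (q - p) :=
    ⟨_, rfl⟩
  have hqp : (0:ℝ) < q - p := by linarith
  have hσ2 : (0:ℝ) < σ ^ 2 := by positivity
  have hLqp : Real.log ((stdNormalCdf ((1 - q) / σ) - stdNormalCdf ((0 - q) / σ)))
      = Real.log ((stdNormalCdf ((1 - q) / σ) - stdNormalCdf ((0 - q) / σ))) := rfl
  have hts' : tstar * (q - p) = (p + q) / 2 * (q - p)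
      + σ ^ 2 * (Real.log (stdNormalCdf ((1 - q) / σ) - stdNormalCdf ((0 - q) / σ))
        - Real.log (stdNormalCdf ((1 - p) / σ) - stdNormalCdf ((0 - p) / σ))) := by
    rw [hts]; field_simp
  have key2 : ∀ r : ℝ, r / σ ^ 2 / 2 * (2 * σ ^ 2) = r := by
    intro r
    have hne : σ ^ 2 * 2 ≠ 0 := by positivity
    rw [div_div, mul_comm 2 (σ ^ 2)]
    exact div_mul_cancel₀ r hne
  have hbase : ∀ t : ℝ,
      (stdNormalPdf ((t - p) / σ) * (stdNormalCdf ((1 - q) / σ) - stdNormalCdf ((0 - q) / σ))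
        ≤ stdNormalPdf ((t - q) / σ) *
            (stdNormalCdf ((1 - p) / σ) - stdNormalCdf ((0 - p) / σ)))
      ↔ tstar ≤ t := by
    intro t
    rw [← Real.log_le_log_iff (mul_pos (phi_pos _) (hZpos q)) (mul_pos (phi_pos _) (hZpos p))]
    rw [Real.log_mul (ne_of_gt (phi_pos _)) (ne_of_gt (hZpos q)),
      Real.log_mul (ne_of_gt (phi_pos _)) (ne_of_gt (hZpos p)), log_phi, log_phi,
      div_pow, div_pow]
    constructor
    · intro h
      have h2 := mul_le_mul_of_nonneg_right h (by positivity : (0:ℝ) ≤ 2 * σ ^ 2)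
      have hineq : (t - q) ^ 2 - (t - p) ^ 2 ≤ 2 * σ ^ 2 * (Real.log (stdNormalCdf ((1 - p) / σ) - stdNormalCdf ((0 - p) / σ)) - Real.log (stdNormalCdf ((1 - q) / σ) - stdNormalCdf ((0 - q) / σ))) := by
        linarith [h2, key2 ((t - p) ^ 2), key2 ((t - q) ^ 2)]
      have hprod : 0 ≤ (t - tstar) * (q - p) := by nlinarith [hineq, hts']
      nlinarith [hprod, hqp]
    · intro h
      have hprod : 0 ≤ (t - tstar) * (q - p) := mul_nonneg (by linarith) hqp.le
      have hineq : (t - q) ^ 2 - (t - p) ^ 2 ≤ 2 * σ ^ 2 * (Real.log (stdNormalCdf ((1 - p) / σ) - stdNormalCdf ((0 - p) / σ)) - Real.log (stdNormalCdf ((1 - q) / σ) - stdNormalCdf ((0 - q) / σ))) := by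
        nlinarith [hprod, hts']
      nlinarith [key2 ((t - p) ^ 2), key2 ((t - q) ^ 2), hineq, hσ2]
  have hbase2 : ∀ t : ℝ,
      (stdNormalPdf ((t - q) / σ) * (stdNormalCdf ((1 - p) / σ) - stdNormalCdf ((0 - p) / σ))
        ≤ stdNormalPdf ((t - p) / σ) *
            (stdNormalCdf ((1 - q) / σ) - stdNormalCdf ((0 - q) / σ)))
      ↔ t ≤ tstar := by
    intro t
    rw [← Real.log_le_log_iff (mul_pos (phi_pos _) (hZpos p)) (mul_pos (phi_pos _) (hZpos q))]
    rw [Real.log_mul (ne_of_gt (phi_pos _)) (ne_of_gt (hZpos q)),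
      Real.log_mul (ne_of_gt (phi_pos _)) (ne_of_gt (hZpos p)), log_phi, log_phi,
      div_pow, div_pow]
    constructor
    · intro h
      have h2 := mul_le_mul_of_nonneg_right h (by positivity : (0:ℝ) ≤ 2 * σ ^ 2)
      have hineq : (t - p) ^ 2 - (t - q) ^ 2 ≤ 2 * σ ^ 2 * (Real.log (stdNormalCdf ((1 - q) / σ) - stdNormalCdf ((0 - q) / σ)) - Real.log (stdNormalCdf ((1 - p) / σ) - stdNormalCdf ((0 - p) / σ))) := by
        linarith [h2, key2 ((t - p) ^ 2), key2 ((t - q) ^ 2)]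
      have hprod : 0 ≤ (tstar - t) * (q - p) := by nlinarith [hineq, hts']
      nlinarith [hprod, hqp]
    · intro h
      have hprod : 0 ≤ (tstar - t) * (q - p) := mul_nonneg (by linarith) hqp.le
      have hineq : (t - p) ^ 2 - (t - q) ^ 2 ≤ 2 * σ ^ 2 * (Real.log (stdNormalCdf ((1 - q) / σ) - stdNormalCdf ((0 - q) / σ)) - Real.log (stdNormalCdf ((1 - p) / σ) - stdNormalCdf ((0 - p) / σ))) := by
        nlinarith [hprod, hts']
      nlinarith [key2 ((t - p) ^ 2), key2 ((t - q) ^ 2), hineq, hσ2]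
  have hsign : ∀ t : ℝ, 0 ≤ truncNormalPdf t q σ - truncNormalPdf t p σ ↔ tstar ≤ t := by
    intro t
    rw [← hbase t, sub_nonneg]
    unfold truncNormalPdf
    rw [div_le_div_iff₀ (hZpos p) (hZpos q), mul_assoc, mul_assoc]
    exact mul_le_mul_iff_right₀ (by positivity)
  have hsign' : ∀ t : ℝ, truncNormalPdf t q σ - truncNormalPdf t p σ ≤ 0 ↔ t ≤ tstar := by
    intro t
    rw [← hbase2 t, sub_nonpos]
    unfold truncNormalPdf
    rw [div_le_div_iff₀ (hZpos q) (hZpos p), mul_assoc, mul_assoc]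
    exact mul_le_mul_iff_right₀ (by positivity)
  rcases le_or_gt tstar 0 with hts0 | hts0
  · have habs : EqOn (fun t => |truncNormalPdf t q σ - truncNormalPdf t p σ|)
        (fun t => truncNormalPdf t q σ - truncNormalPdf t p σ) (Set.uIcc (0:ℝ) 1) := by
      intro t ht
      rw [Set.uIcc_of_le (by norm_num : (0:ℝ) ≤ 1)] at ht
      exact abs_of_nonneg ((hsign t).2 (le_trans hts0 ht.1))
    rw [intervalIntegral.integral_congr habs,
      intervalIntegral.integral_sub (hii q 0 1) (hii p 0 1), hone q, hone p]
    simpa using hRHSpos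
  rcases le_or_gt 1 tstar with hts1 | hts1
  · have habs : EqOn (fun t => |truncNormalPdf t q σ - truncNormalPdf t p σ|)
        (fun t => truncNormalPdf t p σ - truncNormalPdf t q σ) (Set.uIcc (0:ℝ) 1) := by
      intro t ht
      rw [Set.uIcc_of_le (by norm_num : (0:ℝ) ≤ 1)] at ht
      have h := (hsign' t).2 (le_trans ht.2 hts1)
      simp only
      rw [abs_of_nonpos h]; ring
    rw [intervalIntegral.integral_congr habs,
      intervalIntegral.integral_sub (hii p 0 1) (hii q 0 1), hone q, hone p]
    simpa using hRHSpos
  · have h0T : (0:ℝ) ≤ tstar := hts0.le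
    have hT1 : tstar ≤ 1 := hts1.le
    have hDii : ∀ a b : ℝ, IntervalIntegrable
        (fun t => |truncNormalPdf t q σ - truncNormalPdf t p σ|) volume a b :=
      fun a b => (((htc q).sub (htc p)).abs).intervalIntegrable a b
    have hsplit := intervalIntegral.integral_add_adjacent_intervals
      (hDii 0 tstar) (hDii tstar 1)
    have hL : (∫ t in (0:ℝ)..tstar, |truncNormalPdf t q σ - truncNormalPdf t p σ|)
        = ∫ t in (0:ℝ)..tstar, (truncNormalPdf t p σ - truncNormalPdf t q σ) := by
      apply intervalIntegral.integral_congr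
      intro t ht
      rw [Set.uIcc_of_le h0T] at ht
      have h := (hsign' t).2 ht.2
      simp only
      rw [abs_of_nonpos h]; ring
    have hR : (∫ t in tstar..(1:ℝ), |truncNormalPdf t q σ - truncNormalPdf t p σ|)
        = ∫ t in tstar..(1:ℝ), (truncNormalPdf t q σ - truncNormalPdf t p σ) := by
      apply intervalIntegral.integral_congr
      intro t ht
      rw [Set.uIcc_of_le hT1] at ht
      simp only
      exact abs_of_nonneg ((hsign t).2 ht.1)
    have hsum : (∫ t in (0:ℝ)..tstar, (truncNormalPdf t q σ - truncNormalPdf t p σ))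
        + (∫ t in tstar..(1:ℝ), (truncNormalPdf t q σ - truncNormalPdf t p σ))
        = ∫ t in (0:ℝ)..(1:ℝ), (truncNormalPdf t q σ - truncNormalPdf t p σ) :=
      intervalIntegral.integral_add_adjacent_intervals
        (((htc q).sub (htc p)).intervalIntegrable 0 tstar)
        (((htc q).sub (htc p)).intervalIntegrable tstar 1)
    have htot : (∫ t in (0:ℝ)..1, (truncNormalPdf t q σ - truncNormalPdf t p σ)) = 0 := by
      rw [intervalIntegral.integral_sub (hii q 0 1) (hii p 0 1), hone q, hone p]; ring
    have hGL : (∫ t in (0:ℝ)..tstar, (truncNormalPdf t q σ - truncNormalPdf t p σ))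
        = truncCdf σ tstar q - truncCdf σ tstar p := by
      rw [intervalIntegral.integral_sub (hii q 0 tstar) (hii p 0 tstar),
        int_trunc hσ q tstar, int_trunc hσ p tstar]
    have hlip := truncCdf_lip hσ h0T hT1 p q
    have habs2 : truncCdf σ tstar p - truncCdf σ tstar q ≤ stdNormalPdf 0 / σ * (q - p) := by
      calc truncCdf σ tstar p - truncCdf σ tstar q
          ≤ |truncCdf σ tstar q - truncCdf σ tstar p| := by
            rw [abs_sub_comm]; exact le_abs_self _
        _ ≤ stdNormalPdf 0 / σ * |q - p| := hlip
        _ = stdNormalPdf 0 / σ * (q - p) := by rw [abs_of_pos hqp]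
    have hLv : (∫ t in (0:ℝ)..tstar, (truncNormalPdf t p σ - truncNormalPdf t q σ))
        = truncCdf σ tstar p - truncCdf σ tstar q := by
      rw [intervalIntegral.integral_sub (hii p 0 tstar) (hii q 0 tstar),
        int_trunc hσ p tstar, int_trunc hσ q tstar]
    have hRv : (∫ t in tstar..(1:ℝ), (truncNormalPdf t q σ - truncNormalPdf t p σ))
        = truncCdf σ tstar p - truncCdf σ tstar q := by
      rw [htot, hGL] at hsum
      linarith [hsum]
    have hqpyx : q - p = y - x := by rw [hp, hq]; ring
    calc (∫ t in (0:ℝ)..1, |truncNormalPdf t q σ - truncNormalPdf t p σ|)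
        = (∫ t in (0:ℝ)..tstar, |truncNormalPdf t q σ - truncNormalPdf t p σ|)
          + ∫ t in tstar..(1:ℝ), |truncNormalPdf t q σ - truncNormalPdf t p σ| := hsplit.symm
      _ = (truncCdf σ tstar p - truncCdf σ tstar q)
          + (truncCdf σ tstar p - truncCdf σ tstar q) := by rw [hL, hR, hLv, hRv]
      _ ≤ 2 * (stdNormalPdf 0 / σ * (q - p)) := by linarith [habs2]
      _ = Real.sqrt 2 / (σ * Real.sqrt π) * (y - x) := by
          rw [hqpyx, const_eq hσ]; ring
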